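/- Let a, u, v be real numbers with cosh(a·cos u) ≠ cos(a·sin u). Then [cos(a·sin(u) + u·v) − e^{−a·cos(u)}·cos(u·v)] / [cosh(a·cos(u)) − cos(a·sin(u))] = 2·Re( e^{iuv} / (exp(a·e^{−iu}) − 1) ). -/

import Mathlib

/-- Lemma 3.1 of Dixit–Maji: for real `a, u, v` with `cosh(a cos u) ≠ cos(a sin u)`,
`[cos(a sin u + uv) − e^{−a cos u} cos(uv)] / [cosh(a cos u) − cos(a sin u)]
  = 2 Re( e^{iuv} / (exp(a e^{−iu}) − 1) )`. -/
theorem generalized_lambert_lemma (a u v : ℝ)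
    (h : Real.cosh (a * Real.cos u) ≠ Real.cos (a * Real.sin u)) :
    (Real.cos (a * Real.sin u + u * v) - Real.exp (-(a * Real.cos u)) * Real.cos (u * v))
      / (Real.cosh (a * Real.cos u) - Real.cos (a * Real.sin u))
    = 2 * (Complex.exp (Complex.I * u * v)
        / (Complex.exp (a * Complex.exp (-(Complex.I * u))) - 1)).re := by
  set c := a * Real.cos u with hc
  set s := a * Real.sin u with hs
  have h1 : Complex.exp (Complex.I * u * v)
      = Complex.ofReal (Real.cos (u * v)) + Complex.ofReal (Real.sin (u * v)) * Complex.I := by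
    rw [show Complex.I * (u : ℂ) * (v : ℂ) = ((u * v : ℝ) : ℂ) * Complex.I by
      push_cast; ring]
    rw [Complex.exp_mul_I, ← Complex.ofReal_cos, ← Complex.ofReal_sin]
  have h2 : Complex.exp ((a : ℂ) * Complex.exp (-(Complex.I * u)))
      = Complex.ofReal (Real.exp c * Real.cos s)
        + Complex.ofReal (-(Real.exp c * Real.sin s)) * Complex.I := by
    have e1 : (a : ℂ) * Complex.exp (-(Complex.I * u)) = (c : ℂ) + ((-s : ℝ) : ℂ) * Complex.I := by
      rw [show -(Complex.I * (u : ℂ)) = ((-u : ℝ) : ℂ) * Complex.I by push_cast; ring]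
      rw [Complex.exp_mul_I, ← Complex.ofReal_cos, ← Complex.ofReal_sin]
      push_cast [hc, hs, Real.cos_neg, Real.sin_neg]
      ring
    rw [e1, Complex.exp_add, Complex.exp_mul_I, ← Complex.ofReal_cos, ← Complex.ofReal_sin, ← Complex.ofReal_exp]
    push_cast [Real.cos_neg, Real.sin_neg]
    ring
  rw [h1, h2]
  simp only [Complex.div_re, Complex.normSq_apply, Complex.add_re, Complex.add_im,
    Complex.sub_re, Complex.sub_im, Complex.ofReal_re, Complex.ofReal_im,
    Complex.mul_re, Complex.mul_im, Complex.I_re, Complex.I_im, Complex.one_re,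
    Complex.one_im, mul_zero, zero_mul, mul_one, sub_zero, zero_add, add_zero, zero_sub]
  have hd1 : Real.cosh c - Real.cos s ≠ 0 := sub_ne_zero.mpr h
  have hpos : 0 < Real.cosh c - Real.cos s :=
    lt_of_le_of_ne (by nlinarith [Real.one_le_cosh c, Real.cos_le_one s]) (Ne.symm hd1)
  have hmul : Real.exp c * Real.exp (-c) = 1 := by rw [← Real.exp_add]; simp
  have hpy : Real.sin s ^ 2 + Real.cos s ^ 2 = 1 := Real.sin_sq_add_cos_sq s
  have hK : (Real.exp c * Real.cos s - 1) * (Real.exp c * Real.cos s - 1)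
      + (-(Real.exp c * Real.sin s)) * (-(Real.exp c * Real.sin s))
      = 2 * Real.exp c * (Real.cosh c - Real.cos s) := by
    rw [Real.cosh_eq]; linear_combination Real.exp c ^ 2 * hpy - hmul
  rw [Real.cos_add]
  have hK' : (Real.exp c * Real.cos s - 1) * (Real.exp c * Real.cos s - 1)
      + (-(Real.exp c * Real.sin s)) * (-(Real.exp c * Real.sin s)) ≠ 0 := by
    rw [hK]; positivity
  field_simp
  rw [Real.cosh_eq]
  have hK2 : (Real.exp c * Real.cos s - 1) * (Real.exp c * Real.cos s - 1)
      + Real.exp c * Real.sin s * (Real.exp c * Real.sin s) ≠ 0 := by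
    rw [show (Real.exp c * Real.cos s - 1) * (Real.exp c * Real.cos s - 1)
      + Real.exp c * Real.sin s * (Real.exp c * Real.sin s)
      = (Real.exp c * Real.cos s - 1) * (Real.exp c * Real.cos s - 1)
      + -(Real.exp c * Real.sin s) * -(Real.exp c * Real.sin s) by ring, hK]
    positivity
  rw [eq_div_iff (by convert hK2 using 1; ring)]
  linear_combination (Real.exp c) ^ 2 * (Real.cos s * Real.cos (u * v)
      - Real.sin s * Real.sin (u * v) - Real.exp (-c) * Real.cos (u * v)) * hpy
    + (Real.cos s * Real.cos (u * v) + Real.sin s * Real.sin (u * v)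
      - Real.exp c * Real.cos (u * v)) * hmul
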